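/- For r > 1, m > 0, and any x₀ > 0, the iterates of the Beverton-Holt map x_{n+1} = r·x_n/(1 + m·x_n) converge to (r − 1)/m as n → ∞. -/

import Mathlib

theorem stmt_4 (r m x₀ : ℝ) (hr : 1 < r) (hm : 0 < m) (hx₀ : 0 < x₀) :
    Filter.Tendsto (fun n : ℕ => (fun x : ℝ => r * x / (1 + m * x))^[n] x₀)
      Filter.atTop (nhds ((r - 1) / m)) := by
  have hr0 : (0:ℝ) < r := lt_trans one_pos hr
  have hr1 : (0:ℝ) < r - 1 := sub_pos.mpr hr
  set f := fun x : ℝ => r * x / (1 + m * x) with hf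
  set c : ℝ := 1/x₀ - m/(r-1) with hc
  have key : ∀ n : ℕ, 0 < c * (r⁻¹)^n + m/(r-1) ∧
      f^[n] x₀ = 1/(c * (r⁻¹)^n + m/(r-1)) := by
    intro n
    induction n with
    | zero =>
      have hce : c * (r⁻¹)^0 + m/(r-1) = 1/x₀ := by simp [hc]
      refine ⟨by rw [hce]; positivity, by rw [hce]; simp⟩
    | succ n ih =>
      obtain ⟨hd, hx⟩ := ih
      set d : ℝ := c * (r⁻¹)^n + m/(r-1) with hdd
      have hstep : c * (r⁻¹)^(n+1) + m/(r-1) = d/r + m/r := by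
        rw [hdd]
        field_simp
        linear_combination (r * c * r⁻¹ ^ n - c * r⁻¹ ^ n) * mul_inv_cancel₀ hr0.ne'
      constructor
      · rw [hstep]
        have : 0 < d/r + m/r := by positivity
        linarith
      · rw [Function.iterate_succ_apply', hx, hstep, hf]
        have h1 : (1:ℝ) + m * (1/d) = (d + m)/d := by field_simp
        simp only [h1]
        have hdm : 0 < d + m := by positivity
        field_simp
  have hlim : Filter.Tendsto (fun n : ℕ => c * (r⁻¹)^n + m/(r-1))
      Filter.atTop (nhds (m/(r-1))) := by
    have h0 : Filter.Tendsto (fun n : ℕ => (r⁻¹)^n) Filter.atTop (nhds 0) := by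
      apply tendsto_pow_atTop_nhds_zero_of_lt_one
      · positivity
      · rw [inv_lt_one_iff₀]; right; exact hr
    have := (h0.const_mul c).add (tendsto_const_nhds (x := m/(r-1)))
    simpa using this
  have hne : m/(r-1) ≠ 0 := by positivity
  have := hlim.inv₀ hne
  have hfin : Filter.Tendsto (fun n : ℕ => 1/(c * (r⁻¹)^n + m/(r-1)))
      Filter.atTop (nhds ((r-1)/m)) := by
    simpa [one_div, one_div_div] using this
  refine hfin.congr fun n => ?_
  exact ((key n).2).symm
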